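/- arXiv:2511.20164 — 3 statements merged into one kernel-verified Lean document; each statement's English description precedes it below -/
import Mathlib

section
/- Let C be a triangulated category, Q the heart of a bounded t-structure on C with cohomology functors H^i : C → Q, and let N ⊆ C be a thick subcategory which is generated by a single object A (i.e. N is the smallest thick subcategory of C containing A). Assume that Q ∩ N is a Serre subcategory of Q (closed under subobjects, quotients, and extensions in Q). Then the following are equivalent: (i) for every object F ∈ N and every i ∈ ℤ, one has H^i(F) ∈ N; (ii) there exists an object B ∈ Q such that N is the smallest thick subcategory of C containing B. -/
open CategoryTheory CategoryTheory.Limits CategoryTheory.Category ZeroObject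
  CategoryTheory.Pretriangulated CategoryTheory.Triangulated

namespace PaperFormal

variable {C : Type*} [Category C] [HasZeroObject C] [HasShift C ℤ]
  [Preadditive C] [∀ n : ℤ, (shiftFunctor C n).Additive] [Pretriangulated C]

/-- A thick subcategory of a (pre)triangulated category, encoded as a predicate on objects:
it contains the zero object, and is closed under isomorphisms, shifts, extensions
(in any distinguished triangle, if the two outer objects satisfy the predicate, so does the
middle one) and direct summands. -/
structure IsThickSubcategory (N : C → Prop) : Prop where
  zero : N 0
  mem_of_iso : ∀ {X Y : C}, (X ≅ Y) → N X → N Y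
  shift : ∀ (X : C) (n : ℤ), N X → N (X⟦n⟧)
  ext₂ : ∀ T : Triangle C, (T ∈ distTriang C) → N T.obj₁ → N T.obj₃ → N T.obj₂
  summand : ∀ (X Y : C) (s : X ⟶ Y) (r : Y ⟶ X), s ≫ r = 𝟙 X → N Y → N X

/-- `N` is the smallest thick subcategory of `C` containing the object `A`:
`N` is thick, contains `A`, and is contained in any thick subcategory containing `A`. -/
def IsThickGeneratedBy (N : C → Prop) (A : C) : Prop :=
  IsThickSubcategory N ∧ N A ∧
    ∀ N' : C → Prop, IsThickSubcategory N' → N' A → ∀ X : C, N X → N' X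

/-- A Serre subcategory of an abelian category: a full subcategory (encoded as a predicate
on objects) closed under subobjects, quotients and extensions. -/
structure IsSerreSubcategory {A : Type*} [Category A] [Abelian A] (P : A → Prop) : Prop where
  mem_of_mono : ∀ {X Y : A} (f : X ⟶ Y), Mono f → P Y → P X
  mem_of_epi : ∀ {X Y : A} (f : X ⟶ Y), Epi f → P X → P Y
  mem_of_extension : ∀ S : ShortComplex A, S.ShortExact → P S.X₁ → P S.X₃ → P S.X₂

/-- The objects of `C` lying in the image of the heart, i.e. isomorphic to the image of an
object of `Q` under the embedding `ι : Q ⥤ C`. -/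
def heartProp {Q : Type*} [Category Q] (ι : Q ⥤ C) : C → Prop :=
  fun X => ∃ a : Q, Nonempty (ι.obj a ≅ X)

/-- The data exhibiting an abelian category `Q`, fully faithfully embedded in a
(pre)triangulated category `C` via `ι : Q ⥤ C`, as the heart of a bounded t-structure on `C`,
together with the associated cohomology functors `H^i : C ⥤ Q` and their standard
properties: normalization on the heart, compatibility with shifts, boundedness
(every object has only finitely many nonzero cohomology objects), the long exact
cohomology sequence associated to a distinguished triangle, and the cohomological
filtration of any object. -/
structure HeartOfBoundedTStructure (Q : Type*) [Category Q] [Abelian Q] (ι : Q ⥤ C) where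
  /-- the embedding of the heart is full -/
  full : ι.Full
  /-- the embedding of the heart is faithful -/
  faithful : ι.Faithful
  /-- the underlying t-structure on `C` -/
  t : TStructure C
  /-- the image of `Q` is exactly the heart of the t-structure `t` -/
  heart_iff : ∀ X : C, heartProp ι X ↔ (t.le 0 X ∧ t.ge 0 X)
  /-- the t-structure is bounded -/
  t_bounded : ∀ X : C, (∃ n : ℤ, t.le n X) ∧ (∃ n : ℤ, t.ge n X)
  /-- the cohomology functors `H^i : C ⥤ Q` -/
  H (i : ℤ) : C ⥤ Q
  H_shift (i n : ℤ) (X : C) : (H i).obj (X⟦n⟧) ≅ (H (i + n)).obj X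
  H_heart_zero (a : Q) : (H 0).obj (ι.obj a) ≅ a
  H_heart_ne_zero (a : Q) (i : ℤ) (hi : i ≠ 0) : IsZero ((H i).obj (ι.obj a))
  /-- boundedness: every object has only finitely many nonzero cohomology objects -/
  bounded (X : C) : ∃ a b : ℤ, ∀ i : ℤ, (i < a ∨ b < i) → IsZero ((H i).obj X)
  /-- connecting morphisms of the long exact cohomology sequence -/
  δ (T : Triangle C) (hT : T ∈ distTriang C) (i : ℤ) :
    (H i).obj T.obj₃ ⟶ (H (i + 1)).obj T.obj₁
  comp_zero₁ (T : Triangle C) (hT : T ∈ distTriang C) (i : ℤ) :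
    (H i).map T.mor₁ ≫ (H i).map T.mor₂ = 0
  comp_zero₂ (T : Triangle C) (hT : T ∈ distTriang C) (i : ℤ) :
    (H i).map T.mor₂ ≫ δ T hT i = 0
  comp_zero₃ (T : Triangle C) (hT : T ∈ distTriang C) (i : ℤ) :
    δ T hT i ≫ (H (i + 1)).map T.mor₁ = 0
  exact₁ (T : Triangle C) (hT : T ∈ distTriang C) (i : ℤ) :
    (ShortComplex.mk _ _ (comp_zero₁ T hT i)).Exact
  exact₂ (T : Triangle C) (hT : T ∈ distTriang C) (i : ℤ) :
    (ShortComplex.mk _ _ (comp_zero₂ T hT i)).Exact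
  exact₃ (T : Triangle C) (hT : T ∈ distTriang C) (i : ℤ) :
    (ShortComplex.mk _ _ (comp_zero₃ T hT i)).Exact
  /-- every object admits a finite filtration with subquotients the shifted
  cohomology objects `H^k(X)⟦-k⟧` -/
  filtration (X : C) : ∃ (a b : ℤ) (F : ℤ → C), IsZero (F (a - 1)) ∧ Nonempty (F b ≅ X) ∧
    ∀ k : ℤ, ∃ (f : F (k - 1) ⟶ F k) (g : F k ⟶ (ι.obj ((H k).obj X))⟦(-k)⟧)
      (h : (ι.obj ((H k).obj X))⟦(-k)⟧ ⟶ (F (k - 1))⟦(1 : ℤ)⟧),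
      Triangle.mk f g h ∈ distTriang C

/-- A full subcategory of `C` (encoded as a predicate on objects) is the heart of a
bounded t-structure on `C`. -/
def IsHeartOfBoundedTStructure (P : C → Prop) : Prop :=
  ∃ t : TStructure C,
    (∀ X : C, (∃ n : ℤ, t.le n X) ∧ (∃ n : ℤ, t.ge n X)) ∧
    (∀ X : C, P X ↔ (t.le 0 X ∧ t.ge 0 X))

section Helpers

variable {Q : Type*} [Category Q]

lemma IsThickSubcategory.summand_iota {N : C → Prop} (hN : IsThickSubcategory N)
    (ι : Q ⥤ C) {x y : Q} (s : x ⟶ y) (r : y ⟶ x) (h : s ≫ r = 𝟙 x)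
    (hy : N (ι.obj y)) : N (ι.obj x) :=
  hN.summand _ _ (ι.map s) (ι.map r) (by rw [← ι.map_comp, h, ι.map_id]) hy

lemma IsThickSubcategory.zero_iota {N : C → Prop} (hN : IsThickSubcategory N)
    (ι : Q ⥤ C) {z y : Q} (hz : IsZero z) (hy : N (ι.obj y)) : N (ι.obj z) :=
  hN.summand_iota ι (hz.to_ y) (hz.from_ y) (hz.eq_of_src _ _) hy

lemma IsThickSubcategory.unshift {N : C → Prop} (hN : IsThickSubcategory N)
    (X : C) (h : N (X⟦(1:ℤ)⟧)) : N X :=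
  hN.mem_of_iso ((shiftFunctorCompIsoId C (1:ℤ) (-1:ℤ) (by omega)).app X)
    (hN.shift _ (-1) h)

lemma IsSerreSubcategory.mem_middle {A : Type*} [Category A] [Abelian A] {P : A → Prop}
    (hP : IsSerreSubcategory P) (S : ShortComplex A) (hS : S.Exact)
    (h1 : P S.X₁) (h3 : P S.X₃) : P S.X₂ := by
  have hker : P (kernel S.g) := by
    have hepi : Epi S.toCycles := (S.exact_iff_epi_toCycles).1 hS
    have : Epi (S.toCycles ≫ S.cyclesIsoKernel.hom) := epi_comp _ _
    exact hP.mem_of_epi _ this h1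
  have him : P (Abelian.coimage S.g) := by
    have h1' : P (Abelian.image S.g) :=
      hP.mem_of_mono (kernel.ι (cokernel.π S.g)) inferInstance h3
    exact hP.mem_of_mono (Abelian.coimageIsoImage S.g).hom inferInstance h1'
  exact hP.mem_of_extension
    (ShortComplex.mk (kernel.ι S.g) (cokernel.π (kernel.ι S.g)) (cokernel.condition _))
    (ShortComplex.ShortExact.mk'
      (ShortComplex.exact_of_g_is_cokernel _ (cokernelIsCokernel _))
      inferInstance inferInstance) hker him

lemma IsSerreSubcategory.mem_biprod {A : Type*} [Category A] [Abelian A] {P : A → Prop}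
    (hP : IsSerreSubcategory P) {X Y : A} (hX : P X) (hY : P Y) : P (X ⊞ Y) :=
  hP.mem_of_extension
    (ShortComplex.mk (biprod.inl : X ⟶ X ⊞ Y) biprod.snd biprod.inl_snd)
    (ShortComplex.Splitting.shortExact
      { r := biprod.fst, s := biprod.inr, f_r := biprod.inl_fst,
        s_g := biprod.inr_snd, id := biprod.total }) hX hY

lemma int_rec_all (G : ℤ → Prop) (a : ℤ) (h0 : G a)
    (hstep : ∀ k : ℤ, G (k - 1) → G k) (hstep' : ∀ k : ℤ, G k → G (k - 1)) :
    ∀ k : ℤ, G k := by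
  have up : ∀ n : ℕ, G (a + n) := by
    intro n
    induction n with
    | zero => simpa using h0
    | succ n ih =>
      have h := hstep (a + ((n : ℕ) + 1 : ℕ))
      rw [show (a + (((n : ℕ) + 1 : ℕ) : ℤ)) - 1 = a + (n : ℕ) by push_cast; ring] at h
      exact h ih
  have down : ∀ n : ℕ, G (a - n) := by
    intro n
    induction n with
    | zero => simpa using h0
    | succ n ih =>
      have h := hstep' (a - (n : ℕ))
      rw [show (a - ((n : ℕ) : ℤ)) - 1 = a - (((n : ℕ) + 1 : ℕ) : ℤ) by push_cast; ring] at h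
      exact h ih
  intro k
  rcases le_or_gt a k with hk | hk
  · obtain ⟨n, hn⟩ := Int.le.dest hk
    rw [← hn]; exact up n
  · obtain ⟨n, hn⟩ := Int.le.dest hk.le
    have : k = a - n := by omega
    rw [this]; exact down n

lemma thick_of_cohomology {Q : Type*} [Category Q] [Abelian Q] {ι : Q ⥤ C}
    (hQ : HeartOfBoundedTStructure Q ι) {N' : C → Prop} (hN' : IsThickSubcategory N')
    (X : C) (hH : ∀ k : ℤ, N' (ι.obj ((hQ.H k).obj X))) : N' X := by
  obtain ⟨a, b, F, hFa, ⟨e⟩, hT⟩ := hQ.filtration X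
  have key : ∀ k : ℤ, N' (F k) := by
    apply int_rec_all (fun k => N' (F k)) (a - 1)
    · exact hN'.mem_of_iso ((isZero_zero C).iso hFa) hN'.zero
    · intro k hk
      obtain ⟨f, g, h, hd⟩ := hT k
      exact hN'.ext₂ _ hd hk (hN'.shift _ (-k) (hH k))
    · intro k hk
      obtain ⟨f, g, h, hd⟩ := hT k
      have hd2 := rot_of_distTriang _ (rot_of_distTriang _ hd)
      have h2 : N' ((F (k - 1))⟦(1:ℤ)⟧) :=
        hN'.ext₂ _ hd2 (hN'.shift _ (-k) (hH k)) (hN'.shift _ 1 hk)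
      exact hN'.unshift _ h2
  exact hN'.mem_of_iso e (key b)

lemma H_zero_obj {Q : Type*} [Category Q] [Abelian Q] {ι : Q ⥤ C}
    (hQ : HeartOfBoundedTStructure Q ι) (i : ℤ) : IsZero ((hQ.H i).obj (0 : C)) := by
  obtain ⟨a, b, hb⟩ := hQ.bounded (0 : C)
  have hz : IsZero ((0 : C)⟦(b - i + 1 : ℤ)⟧) :=
    (shiftFunctor C (b - i + 1 : ℤ)).map_isZero (isZero_zero C)
  have e1 : (hQ.H i).obj (0 : C) ≅ (hQ.H i).obj ((0 : C)⟦(b - i + 1 : ℤ)⟧) :=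
    (hQ.H i).mapIso ((isZero_zero C).iso hz)
  have e2 := hQ.H_shift i (b - i + 1) (0 : C)
  have hzz := hb (i + (b - i + 1)) (Or.inr (by omega))
  exact hzz.of_iso (e1 ≪≫ e2)

/-- Iterated binary biproduct `f a ⊞ f (a+1) ⊞ ⋯ ⊞ f (a+m)`. -/
noncomputable def biprodUpTo {Q : Type*} [Category Q] [Abelian Q] (f : ℤ → Q) (a : ℤ) :
    ℕ → Q
  | 0 => f a
  | (m + 1) => biprodUpTo f a m ⊞ f (a + (m + 1 : ℕ))

lemma biprodUpTo_summand {Q : Type*} [Category Q] [Abelian Q] (f : ℤ → Q) (a : ℤ)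
    (P : Q → Prop) (hP : ∀ {x y : Q} (s : x ⟶ y) (r : y ⟶ x), s ≫ r = 𝟙 x → P y → P x) :
    ∀ m : ℕ, P (biprodUpTo f a m) → ∀ j : ℕ, j ≤ m → P (f (a + j)) := by
  intro m
  induction m with
  | zero =>
    intro hm j hj
    obtain rfl : j = 0 := Nat.le_zero.1 hj
    simpa [biprodUpTo] using hm
  | succ m ih =>
    intro hm j hj
    rw [biprodUpTo] at hm
    rcases Nat.lt_or_ge j (m + 1) with h' | h'
    · exact ih (hP biprod.inl biprod.fst biprod.inl_fst hm) j (Nat.lt_succ_iff.1 h')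
    · obtain rfl : j = m + 1 := le_antisymm hj h'
      exact hP biprod.inr biprod.snd biprod.inr_snd hm

lemma biprodUpTo_mem {Q : Type*} [Category Q] [Abelian Q] {P : Q → Prop}
    (hP : IsSerreSubcategory P) (f : ℤ → Q) (a : ℤ) (hf : ∀ k : ℤ, P (f k)) :
    ∀ m : ℕ, P (biprodUpTo f a m)
  | 0 => hf a
  | (m + 1) => hP.mem_biprod (biprodUpTo_mem hP f a hf m) (hf _)

end Helpers


theorem statement_0 [IsTriangulated C]
    (Q : Type*) [Category Q] [Abelian Q] (ι : Q ⥤ C)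
    (hQ : HeartOfBoundedTStructure Q ι)
    (N : C → Prop) (A : C) (hNA : IsThickGeneratedBy N A)
    (hSerre : IsSerreSubcategory (fun a : Q => N (ι.obj a))) :
    (∀ F : C, N F → ∀ i : ℤ, N (ι.obj ((hQ.H i).obj F))) ↔
      (∃ B : Q, IsThickGeneratedBy N (ι.obj B)) := by
  constructor
  · intro h
    obtain ⟨hNthick, hNA', hNmin⟩ := hNA
    obtain ⟨a, b, hb⟩ := hQ.bounded A
    refine ⟨biprodUpTo (fun k => (hQ.H k).obj A) a ((b - a).toNat), hNthick, ?_, ?_⟩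
    · exact biprodUpTo_mem hSerre _ a (fun k => h A hNA' k) _
    · intro N' hN' hB' X hX
      refine hNmin N' hN' ?_ X hX
      refine thick_of_cohomology hQ hN' A (fun k => ?_)
      by_cases hk : a ≤ k ∧ k ≤ b
      · have hkk : a + (((k - a).toNat : ℕ) : ℤ) = k := by omega
        have hj : (k - a).toNat ≤ (b - a).toNat := by omega
        have := biprodUpTo_summand (fun k => (hQ.H k).obj A) a
          (fun q => N' (ι.obj q))
          (fun s r hsr hy => hN'.summand_iota ι s r hsr hy)
          ((b - a).toNat) hB' ((k - a).toNat) hj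
        rw [hkk] at this
        exact this
      · have hz : IsZero ((hQ.H k).obj A) := hb k (by omega)
        exact hN'.zero_iota ι hz hB'
  · rintro ⟨B, hB⟩
    obtain ⟨hNthick, hNB, hNmin⟩ := hB
    have hN'thick : IsThickSubcategory
        (fun F => N F ∧ ∀ i : ℤ, N (ι.obj ((hQ.H i).obj F))) := by
      constructor
      · exact ⟨hNthick.zero, fun i => hNthick.zero_iota ι (H_zero_obj hQ i) hNB⟩
      · intro X Y e hX
        exact ⟨hNthick.mem_of_iso e hX.1, fun i =>
          hNthick.mem_of_iso (ι.mapIso ((hQ.H i).mapIso e)) (hX.2 i)⟩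
      · intro X n hX
        exact ⟨hNthick.shift X n hX.1, fun i =>
          hNthick.mem_of_iso (ι.mapIso (hQ.H_shift i n X).symm) (hX.2 (i + n))⟩
      · intro T hT h1 h3
        exact ⟨hNthick.ext₂ T hT h1.1 h3.1, fun i =>
          hSerre.mem_middle _ (hQ.exact₁ T hT i) (h1.2 i) (h3.2 i)⟩
      · intro X Y s r hsr hY
        refine ⟨hNthick.summand X Y s r hsr hY.1, fun i => ?_⟩
        have hsm : IsSplitMono ((hQ.H i).map s) :=
          IsSplitMono.mk' ⟨(hQ.H i).map r, by rw [← (hQ.H i).map_comp, hsr, (hQ.H i).map_id]⟩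
        exact hSerre.mem_of_mono ((hQ.H i).map s) inferInstance (hY.2 i)
    have hB' : N (ι.obj B) ∧ ∀ i : ℤ, N (ι.obj ((hQ.H i).obj (ι.obj B))) := by
      refine ⟨hNB, fun i => ?_⟩
      rcases eq_or_ne i 0 with rfl | hi
      · exact hNthick.mem_of_iso (ι.mapIso (hQ.H_heart_zero B)).symm hNB
      · exact hNthick.zero_iota ι (hQ.H_heart_ne_zero B i hi) hNB
    intro F hF i
    exact (hNmin _ hN'thick hB' F hF).2 i

end PaperFormal
end

section
/- Let C be a triangulated category, Q the heart of a bounded t-structure on C with cohomology functors H^i : C → Q, and let N ⊆ C be a thick subcategory such that Q ∩ N is a Serre subcategory of Q. If there exists an object B ∈ Q such that N is the smallest thick subcategory of C containing B, then for every object F ∈ N and every i ∈ ℤ one has H^i(F) ∈ N. -/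
open CategoryTheory CategoryTheory.Limits CategoryTheory.Category ZeroObject
  CategoryTheory.Pretriangulated CategoryTheory.Triangulated

namespace PaperFormal

variable {C : Type*} [Category C] [HasZeroObject C] [HasShift C ℤ]
  [Preadditive C] [∀ n : ℤ, (shiftFunctor C n).Additive] [Pretriangulated C]

theorem statement_1 [IsTriangulated C]
    (Q : Type*) [Category Q] [Abelian Q] (ι : Q ⥤ C)
    (hQ : HeartOfBoundedTStructure Q ι)
    (N : C → Prop) (hN : IsThickSubcategory N)
    (hSerre : IsSerreSubcategory (fun a : Q => N (ι.obj a)))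
    (B : Q) (hB : IsThickGeneratedBy N (ι.obj B)) :
    ∀ F : C, N F → ∀ i : ℤ, N (ι.obj ((hQ.H i).obj F)) := by
  -- Auxiliary: any zero object of `Q` lies in `N` after embedding.
  have hzeroQ : ∀ a : Q, IsZero a → N (ι.obj a) := fun a ha =>
    hSerre.mem_of_mono (ha.to_ B) ⟨fun {Z} u v _ => ha.eq_of_tgt u v⟩ hB.2.1
  -- The candidate thick subcategory.
  set N' : C → Prop := fun X => ∀ i : ℤ, N (ι.obj ((hQ.H i).obj X)) with hN'def
  have hthick : IsThickSubcategory N' := by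
    constructor
    · -- zero
      intro i
      refine hzeroQ _ ?_
      have hd := contractible_distinguished (0 : C)
      have h1 := hQ.comp_zero₁ _ hd i
      dsimp [contractibleTriangle] at h1
      rw [(isZero_zero C).eq_of_src (0 : (0 : C) ⟶ 0) (𝟙 (0 : C))] at h1
      simp only [Triangle.mk_mor₁, Triangle.mk_mor₂, CategoryTheory.Functor.map_id, Category.comp_id] at h1
      erw [CategoryTheory.Functor.map_id, Category.comp_id] at h1
      exact (IsZero.iff_id_eq_zero _).2 h1
    · intro X Y e hX i
      exact hN.mem_of_iso (ι.mapIso ((hQ.H i).mapIso e)) (hX i)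
    · intro X n hX i
      exact hN.mem_of_iso (ι.mapIso (hQ.H_shift i n X).symm) (hX (i + n))
    · -- extensions via the long exact sequence
      intro T hT h1 h3 i
      set S : ShortComplex Q := ShortComplex.mk _ _ (hQ.comp_zero₁ T hT i) with hSdef
      have hSex : S.Exact := hQ.exact₁ T hT i
      -- epimorphism onto cycles
      have hepi : Epi S.toCycles := hSex.epi_toCycles
      have hK : N (ι.obj S.cycles) := hSerre.mem_of_epi S.toCycles hepi (h1 i)
      -- the image is a subobject of H^i(T.obj₃)
      have hI : N (ι.obj (Abelian.image S.g)) :=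
        hSerre.mem_of_mono (Abelian.image.ι S.g) inferInstance (h3 i)
      -- short exact sequence cycles → X₂ → image
      have hw : S.iCycles ≫ Abelian.factorThruImage S.g = 0 := by
        rw [← cancel_mono (Abelian.image.ι S.g), Category.assoc, Abelian.image.fac,
          ShortComplex.iCycles_g, zero_comp]
      set S' : ShortComplex Q := ShortComplex.mk S.iCycles (Abelian.factorThruImage S.g) hw
        with hS'def
      have hS'ex : S'.ShortExact := by
        refine ShortComplex.ShortExact.mk' ?_ inferInstance inferInstance
        refine ShortComplex.exact_of_f_is_kernel S' ?_
        refine KernelFork.IsLimit.ofι _ _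
          (fun {A} u hu => S.liftCycles u ?_) (fun {A} u hu => S.liftCycles_i u _) ?_
        · rw [← Abelian.image.fac S.g, ← Category.assoc, hu, zero_comp]
        · intro A u hu m hm
          rw [← cancel_mono S.iCycles, hm]
          simp
      exact hSerre.mem_of_extension S' hS'ex hK hI
    · intro X Y s r hsr hY i
      have : (hQ.H i).map s ≫ (hQ.H i).map r = 𝟙 _ := by
        rw [← CategoryTheory.Functor.map_comp, hsr, CategoryTheory.Functor.map_id]
      exact hSerre.mem_of_mono ((hQ.H i).map s) (mono_of_mono_fac this) (hY i)
  have hBmem : N' (ι.obj B) := by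
    intro i
    by_cases hi : i = 0
    · subst hi
      exact hN.mem_of_iso (ι.mapIso (hQ.H_heart_zero B).symm) hB.2.1
    · exact hzeroQ _ (hQ.H_heart_ne_zero B i hi)
  intro F hF i
  exact hB.2.2 N' hthick hBmem F hF i


end PaperFormal
end

section
/- Let C be a triangulated category, Q the heart of a bounded t-structure on C with cohomology functors H^i : C → Q, and let N ⊆ C be a thick subcategory generated by a single object A ∈ C (N = ⟨A⟩). Assume that H^i(F) ∈ N for every F ∈ N and every i ∈ ℤ. Then the object B := ⊕_{i∈ℤ} H^i(A) lies in Q, and N equals the smallest thick subcategory of C containing B; in particular N is generated by an object of the heart Q. -/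
open CategoryTheory CategoryTheory.Limits CategoryTheory.Category ZeroObject
  CategoryTheory.Pretriangulated CategoryTheory.Triangulated

namespace PaperFormal

variable {C : Type*} [Category C] [HasZeroObject C] [HasShift C ℤ]
  [Preadditive C] [∀ n : ℤ, (shiftFunctor C n).Additive] [Pretriangulated C]

attribute [local instance] Abelian.hasFiniteBiproducts

section Aux

variable {Q : Type*} [Category Q] [Abelian Q] (ι : Q ⥤ C) [ι.Full] [ι.Faithful]

lemma aux_id_zero {x : Q} (hx : IsZero x) : 𝟙 (ι.obj x) = 0 := by
  have h : ι.preimage (0 : ι.obj x ⟶ ι.obj x) = 𝟙 x := hx.eq_of_src _ _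
  calc 𝟙 (ι.obj x) = ι.map (𝟙 x) := (ι.map_id x).symm
    _ = ι.map (ι.preimage 0) := by rw [h]
    _ = 0 := ι.map_preimage _

lemma aux_map_zero {x y : Q} : ι.map (0 : x ⟶ y) = 0 := by
  have h : (0 : x ⟶ y) = (0 : x ⟶ (0 : Q)) ≫ (0 : (0 : Q) ⟶ y) := by simp
  rw [h, ι.map_comp, ← Category.id_comp (ι.map (0 : (0 : Q) ⟶ y)),
    aux_id_zero ι (isZero_zero Q), zero_comp, comp_zero]

lemma aux_mem_of_isZero (N' : C → Prop) (hN' : IsThickSubcategory N') {x : Q}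
    (hx : IsZero x) : N' (ι.obj x) := by
  apply hN'.summand _ (0 : C) 0 0 _ hN'.zero
  rw [aux_id_zero ι hx]
  simp

lemma aux_mem_biprod (N' : C → Prop) (hN' : IsThickSubcategory N') (x y : Q)
    (hx : N' (ι.obj x)) (hy : N' (ι.obj y)) : N' (ι.obj (x ⊞ y)) := by
  have e1 : ι.map (biprod.inl : x ⟶ x ⊞ y) ≫ ι.map biprod.fst = 𝟙 (ι.obj x) := by
    rw [← ι.map_comp, biprod.inl_fst, ι.map_id]
  have e2 : ι.map (biprod.inl : x ⟶ x ⊞ y) ≫ ι.map biprod.snd = 0 := by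
    rw [← ι.map_comp, biprod.inl_snd, aux_map_zero]
  have e3 : ι.map (biprod.inr : y ⟶ x ⊞ y) ≫ ι.map biprod.fst = 0 := by
    rw [← ι.map_comp, biprod.inr_fst, aux_map_zero]
  have e4 : ι.map (biprod.inr : y ⟶ x ⊞ y) ≫ ι.map biprod.snd = 𝟙 (ι.obj y) := by
    rw [← ι.map_comp, biprod.inr_snd, ι.map_id]
  have total : ι.map (biprod.fst : x ⊞ y ⟶ x) ≫ ι.map biprod.inl +
      ι.map (biprod.snd : x ⊞ y ⟶ y) ≫ ι.map biprod.inr = 𝟙 (ι.obj (x ⊞ y)) := by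
    have hφ : ι.preimage (ι.map (biprod.fst : x ⊞ y ⟶ x) ≫ ι.map biprod.inl +
        ι.map (biprod.snd : x ⊞ y ⟶ y) ≫ ι.map biprod.inr) = 𝟙 (x ⊞ y) := by
      apply biprod.hom_ext'
      · apply ι.map_injective
        rw [ι.map_comp, ι.map_preimage, Preadditive.comp_add, ← Category.assoc,
          ← Category.assoc, e1, e2, Category.id_comp, zero_comp, add_zero,
          ι.map_comp]
        simp
      · apply ι.map_injective
        rw [ι.map_comp, ι.map_preimage, Preadditive.comp_add, ← Category.assoc,
          ← Category.assoc, e3, e4, Category.id_comp, zero_comp, zero_add,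
          ι.map_comp]
        simp
    conv_rhs => rw [← ι.map_id, ← hφ, ι.map_preimage]
  let bc : BinaryBicone (ι.obj x) (ι.obj y) :=
    { pt := ι.obj (x ⊞ y)
      fst := ι.map biprod.fst
      snd := ι.map biprod.snd
      inl := ι.map biprod.inl
      inr := ι.map biprod.inr
      inl_fst := e1
      inl_snd := e2
      inr_fst := e3
      inr_snd := e4 }
  have hb : bc.IsBilimit := isBinaryBilimitOfTotal bc total
  exact hN'.mem_of_iso (biprod.uniqueUpToIso _ _ hb).symm
    (hN'.ext₂ _ (binaryBiproductTriangle_distinguished (ι.obj x) (ι.obj y)) hx hy)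

noncomputable def aux_decompIso {J : Type} [Fintype J] [DecidableEq J] (f : J → Q) (j0 : J) :
    (⨁ f) ≅ f j0 ⊞ ⨁ Subtype.restrict (fun j => j ≠ j0) f where
  hom := biprod.lift (biproduct.π f j0) (biproduct.toSubtype f _)
  inv := biprod.desc (biproduct.ι f j0) (biproduct.fromSubtype f _)
  hom_inv_id := by
    rw [biprod.lift_desc]
    apply biproduct.hom_ext'
    intro j
    by_cases h : j = j0
    · subst h
      simp [biproduct.ι_π_self_assoc]
    · simp [h, biproduct.ι_π, Preadditive.comp_add]
  inv_hom_id := by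
    apply biprod.hom_ext'
    · apply biprod.hom_ext <;> simp
    · apply biprod.hom_ext <;> simp

lemma aux_assemble (N' : C → Prop) (hN' : IsThickSubcategory N') :
    ∀ (n : ℕ) (J : Type) (_ : Fintype J) (_ : DecidableEq J), Fintype.card J = n →
      ∀ f : J → Q, (∀ j, N' (ι.obj (f j))) → N' (ι.obj (⨁ f)) := by
  intro n
  induction n with
  | zero =>
    intro J _ _ hcard f hf
    have hJ : IsEmpty J := Fintype.card_eq_zero_iff.mp hcard
    have hz : IsZero (⨁ f) := by
      rw [IsZero.iff_id_eq_zero]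
      apply biproduct.hom_ext
      intro j
      exact isEmptyElim j
    exact aux_mem_of_isZero ι N' hN' hz
  | succ n ih =>
    intro J _ _ hcard f hf
    obtain ⟨j0⟩ : Nonempty J := Fintype.card_pos_iff.mp (by omega)
    have hcard' : Fintype.card {j : J // j ≠ j0} = n := by
      have h1 : Fintype.card {j : J // j = j0} = 1 := Fintype.card_subtype_eq j0
      have h2 := Fintype.card_subtype_compl (fun j : J => j = j0)
      have h3 : Fintype.card {j : J // j ≠ j0} = Fintype.card {j : J // ¬ j = j0} := rfl
      omega
    have hrest := ih {j : J // j ≠ j0} inferInstance inferInstance hcard'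
      (Subtype.restrict _ f) (fun j => hf j)
    exact hN'.mem_of_iso (ι.mapIso (aux_decompIso f j0).symm)
      (aux_mem_biprod ι N' hN' (f j0) _ (hf j0) hrest)

end Aux

theorem statement_2 [IsTriangulated C]
    (Q : Type*) [Category Q] [Abelian Q] (ι : Q ⥤ C)
    (hQ : HeartOfBoundedTStructure Q ι)
    (N : C → Prop) (A : C) (hNA : IsThickGeneratedBy N A)
    (hH : ∀ F : C, N F → ∀ i : ℤ, N (ι.obj ((hQ.H i).obj F)))
    (a b : ℤ) (hab : ∀ i : ℤ, (i < a ∨ b < i) → IsZero ((hQ.H i).obj A)) :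
    heartProp ι (ι.obj (⨁ fun i : { i : ℤ // i ∈ Finset.Icc a b } => (hQ.H (i : ℤ)).obj A)) ∧
      IsThickGeneratedBy N
        (ι.obj (⨁ fun i : { i : ℤ // i ∈ Finset.Icc a b } => (hQ.H (i : ℤ)).obj A)) := by
  haveI := hQ.full
  haveI := hQ.faithful
  obtain ⟨hNthick, hA, hmin⟩ := hNA
  refine ⟨⟨_, ⟨Iso.refl _⟩⟩, hNthick, ?_, ?_⟩
  · exact aux_assemble ι N hNthick (Fintype.card _) _ inferInstance inferInstance rfl
      _ (fun j => hH A hA j)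
  · intro N' hN' hB X hX
    apply hmin N' hN' _ X hX
    have hcoh : ∀ k : ℤ, N' (ι.obj ((hQ.H k).obj A)) := by
      intro k
      by_cases hk : k ∈ Finset.Icc a b
      · refine hN'.summand _ _
          (ι.map (biproduct.ι (fun i : { i : ℤ // i ∈ Finset.Icc a b } =>
            (hQ.H (i : ℤ)).obj A) ⟨k, hk⟩))
          (ι.map (biproduct.π (fun i : { i : ℤ // i ∈ Finset.Icc a b } =>
            (hQ.H (i : ℤ)).obj A) ⟨k, hk⟩)) ?_ hB
        rw [← ι.map_comp, biproduct.ι_π_self, ι.map_id]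
      · refine aux_mem_of_isZero ι N' hN' (hab k ?_)
        rw [Finset.mem_Icc] at hk
        omega
    obtain ⟨a', b', F, hF0, ⟨eF⟩, hT⟩ := hQ.filtration A
    have up : ∀ k : ℤ, a' - 1 ≤ k → N' (F k) := by
      refine Int.le_induction ?_ ?_
      · exact hN'.mem_of_iso hF0.isoZero.symm hN'.zero
      · intro k hk ih
        obtain ⟨f, g, h, hd⟩ := hT (k + 1)
        have h1 : N' (F (k + 1 - 1)) := by
          have e : k + 1 - 1 = k := by ring
          rw [e]
          exact ih
        have h3 : N' ((ι.obj ((hQ.H (k + 1)).obj A))⟦(-(k + 1))⟧) :=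
          hN'.shift _ _ (hcoh (k + 1))
        exact hN'.ext₂ _ hd h1 h3
    have down : ∀ k : ℤ, k ≤ a' - 1 → N' (F k) := by
      refine Int.le_induction_down ?_ ?_
      · exact hN'.mem_of_iso hF0.isoZero.symm hN'.zero
      · intro k hk ih
        obtain ⟨f, g, h, hd⟩ := hT k
        have h3 : N' ((ι.obj ((hQ.H k).obj A))⟦(-k)⟧) :=
          hN'.shift _ _ (hcoh k)
        have h2 : N' ((F k)⟦(1 : ℤ)⟧) := hN'.shift _ _ ih
        have h5 : N' ((F (k - 1))⟦(1 : ℤ)⟧) :=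
          hN'.ext₂ _ (rot_of_distTriang _ (rot_of_distTriang _ hd)) h3 h2
        have h6 : N' ((F (k - 1))⟦(1 : ℤ)⟧⟦(-1 : ℤ)⟧) := hN'.shift _ _ h5
        exact hN'.mem_of_iso (shiftShiftNeg (F (k - 1)) (1 : ℤ)) h6
    have hFb : N' (F b') := by
      rcases le_or_gt (a' - 1) b' with h | h
      · exact up b' h
      · exact down b' h.le
    exact hN'.mem_of_iso eF hFb

end PaperFormal
end
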